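/- Let G = [I_k | P] be the generator matrix of a systematic binary linear code of length n and dimension k, with columns g₁,…,g_n ∈ F₂^k (so g_i = e_i for i ≤ k). Suppose that for every i ∈ {1,…,k} there exist two disjoint recovery sets R_{i,1}, R_{i,2} ⊆ {1,…,n} with R_{i,1} ∩ R_{i,2} = ∅, i ∉ R_{i,1} ∪ R_{i,2}, and ∑_{j ∈ R_{i,t}} g_j = e_i for t = 1, 2. Then every standard basis vector e_i of F₂^k lies in the linear span of the set X² = { g_a ⊙ g_b : k < a < b ≤ n }, where ⊙ denotes the componentwise (Hadamard) product of vectors in F₂^k. -/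
import Mathlib

lemma zmod2_mul_self : ∀ x : ZMod 2, x * x = x := by decide

theorem stmt_13 (k n : ℕ) (hk : 1 ≤ k) (hkn : k ≤ n)
    (g : Fin n → Fin k → ZMod 2)
    (hsys : ∀ i : Fin k, g (Fin.castLE hkn i) = Pi.single i 1)
    (hrec : ∀ i : Fin k, ∃ R₁ R₂ : Finset (Fin n),
      Disjoint R₁ R₂ ∧
      Fin.castLE hkn i ∉ R₁ ∧ Fin.castLE hkn i ∉ R₂ ∧
      (∑ j ∈ R₁, g j) = Pi.single i 1 ∧ (∑ j ∈ R₂, g j) = Pi.single i 1) :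
    ∀ i : Fin k, (Pi.single i 1 : Fin k → ZMod 2) ∈
      Submodule.span (ZMod 2)
        { x : Fin k → ZMod 2 | ∃ a b : Fin n, k ≤ (a : ℕ) ∧ a < b ∧
            x = fun s => g a s * g b s } := by
  classical
  intro i
  obtain ⟨R₁, R₂, hd, hi1, hi2, hs1, hs2⟩ := hrec i
  set P₁ := R₁.filter (fun a : Fin n => k ≤ (a : ℕ)) with hP₁
  set P₂ := R₂.filter (fun a : Fin n => k ≤ (a : ℕ)) with hP₂
  -- systematic columns of R₁/R₂ give single vectors with index ≠ i
  have key : (Pi.single i 1 : Fin k → ZMod 2)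
      = ∑ a ∈ P₁, ∑ b ∈ P₂, (fun s => g a s * g b s) := by
    have h0 : ∑ a ∈ R₁, ∑ b ∈ R₂, (fun s => g a s * g b s)
        = (Pi.single i 1 : Fin k → ZMod 2) := by
      funext s
      have e1 := congrFun hs1 s
      have e2 := congrFun hs2 s
      simp only [Finset.sum_apply] at e1 e2 ⊢
      rw [← Finset.sum_mul_sum, e1, e2, zmod2_mul_self]
    have h1 : ∑ a ∈ P₁, ∑ b ∈ R₂, (fun s => g a s * g b s)
        = ∑ a ∈ R₁, ∑ b ∈ R₂, (fun s => g a s * g b s) := by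
      apply Finset.sum_subset (Finset.filter_subset _ _)
      intro a haR hnp
      have ha : (a : ℕ) < k := by
        by_contra h
        exact hnp (Finset.mem_filter.mpr ⟨haR, le_of_not_gt h⟩)
      set j : Fin k := ⟨(a : ℕ), ha⟩ with hj
      have hca : Fin.castLE hkn j = a := by ext; rfl
      have hga : g a = Pi.single j 1 := by rw [← hca, hsys]
      have hji : j ≠ i := by
        intro h
        exact hi1 (by rw [← h, hca]; exact haR)
      funext s
      simp only [Finset.sum_apply, Pi.zero_apply]
      rw [← Finset.mul_sum]
      have e2 := congrFun hs2 s
      simp only [Finset.sum_apply] at e2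
      rw [e2, hga]
      rcases eq_or_ne s j with h | h
      · rw [h, Pi.single_eq_of_ne hji, mul_zero]
      · rw [Pi.single_eq_of_ne h, zero_mul]
    have h2 : ∑ b ∈ P₂, ∑ a ∈ P₁, (fun s => g a s * g b s)
        = ∑ b ∈ R₂, ∑ a ∈ P₁, (fun s => g a s * g b s) := by
      apply Finset.sum_subset (Finset.filter_subset _ _)
      intro b hbR hnp
      have hb : (b : ℕ) < k := by
        by_contra h
        exact hnp (Finset.mem_filter.mpr ⟨hbR, le_of_not_gt h⟩)
      set j' : Fin k := ⟨(b : ℕ), hb⟩ with hj'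
      have hcb : Fin.castLE hkn j' = b := by ext; rfl
      have hgb : g b = Pi.single j' 1 := by rw [← hcb, hsys]
      have hji : j' ≠ i := by
        intro h
        exact hi2 (by rw [← h, hcb]; exact hbR)
      funext s
      simp only [Finset.sum_apply, Pi.zero_apply]
      rw [← Finset.sum_mul, hgb]
      rcases eq_or_ne s j' with h | h
      · -- need ∑ a ∈ P₁, g a j' = 0
        rw [h]
        have t1 : ∑ a ∈ R₁, g a j' = 0 := by
          have e1 := congrFun hs1 j'
          simp only [Finset.sum_apply] at e1
          rw [e1, Pi.single_eq_of_ne hji]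
        have t2 : ∑ a ∈ P₁, g a j' = ∑ a ∈ R₁, g a j' := by
          apply Finset.sum_subset (Finset.filter_subset _ _)
          intro a haR hnp'
          have ha : (a : ℕ) < k := by
            by_contra h'
            exact hnp' (Finset.mem_filter.mpr ⟨haR, le_of_not_gt h'⟩)
          set j : Fin k := ⟨(a : ℕ), ha⟩ with hj
          have hca : Fin.castLE hkn j = a := by ext; rfl
          have hga : g a = Pi.single j 1 := by rw [← hca, hsys]
          have hjj : j' ≠ j := by
            intro h
            have : a = b := by rw [← hca, ← hcb, h]
            exact Finset.disjoint_left.mp hd (this ▸ haR) hbR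
          rw [hga, Pi.single_eq_of_ne hjj]
        rw [t2, t1, zero_mul]
      · rw [Pi.single_eq_of_ne h, mul_zero]
    calc (Pi.single i 1 : Fin k → ZMod 2)
        = ∑ a ∈ R₁, ∑ b ∈ R₂, (fun s => g a s * g b s) := h0.symm
      _ = ∑ a ∈ P₁, ∑ b ∈ R₂, (fun s => g a s * g b s) := h1.symm
      _ = ∑ b ∈ R₂, ∑ a ∈ P₁, (fun s => g a s * g b s) := Finset.sum_comm
      _ = ∑ b ∈ P₂, ∑ a ∈ P₁, (fun s => g a s * g b s) := h2.symm
      _ = ∑ a ∈ P₁, ∑ b ∈ P₂, (fun s => g a s * g b s) := Finset.sum_comm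
  rw [key]
  refine Submodule.sum_mem _ fun a ha => Submodule.sum_mem _ fun b hb => ?_
  have haR : a ∈ R₁ := Finset.mem_of_mem_filter a ha
  have hbR : b ∈ R₂ := Finset.mem_of_mem_filter b hb
  have hka : k ≤ (a : ℕ) := (Finset.mem_filter.mp ha).2
  have hkb : k ≤ (b : ℕ) := (Finset.mem_filter.mp hb).2
  have hab : a ≠ b := fun h => Finset.disjoint_left.mp hd haR (h ▸ hbR)
  rcases lt_or_gt_of_ne hab with h | h
  · exact Submodule.subset_span ⟨a, b, hka, h, rfl⟩
  · exact Submodule.subset_span ⟨b, a, hkb, h, by funext s; exact mul_comm _ _⟩
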